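/- Let M₁ = (V, B₁) and M₂ = (V, B₂) be matroids on a common finite ground set V, both of rank r, with B₁ ∩ B₂ ≠ ∅, and let w ∈ ℤ^V with W = ‖w‖∞ = max_{i∈V} |w_i|. Define g : ℤ^V → ℤ by g(p) = max_{B∈B₁} p(B) + max_{B∈B₂} (w − p)(B). Then there exists p* ∈ ℤ^V minimizing g over ℤ^V with ‖p*‖∞ ≤ rW. -/

import Mathlib

/-- A matroid on a finite ground set `V`, given by its nonempty family of bases
satisfying the symmetric exchange axiom: for any bases `B₁, B₂` and `i ∈ B₁ \ B₂`
there is `j ∈ B₂ \ B₁` with `B₁ \ {i} ∪ {j}` and `B₂ \ {j} ∪ {i}` both bases. -/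
structure BaseFamily (V : Type*) [DecidableEq V] where
  bases : Finset (Finset V)
  nonempty : bases.Nonempty
  exchange : ∀ B₁ ∈ bases, ∀ B₂ ∈ bases, ∀ i ∈ B₁ \ B₂, ∃ j ∈ B₂ \ B₁,
    insert j (B₁.erase i) ∈ bases ∧ insert i (B₂.erase j) ∈ bases

/-- The maximum `v`-weight `max_{B ∈ B} v(B)` of a base. -/
def BaseFamily.maxWeight {V : Type*} [DecidableEq V] (M : BaseFamily V) (v : V → ℤ) : ℤ :=
  M.bases.sup' M.nonempty fun B => ∑ i ∈ B, v i

/-- The family `B^v = argmax_{B ∈ B} v(B)` of maximum-`v`-weight bases. -/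
def BaseFamily.argmax {V : Type*} [DecidableEq V] (M : BaseFamily V) (v : V → ℤ) :
    Finset (Finset V) :=
  M.bases.filter fun B => ∑ i ∈ B, v i = M.maxWeight v

lemma BaseFamily.argmax_nonempty {V : Type*} [DecidableEq V] (M : BaseFamily V) (v : V → ℤ) :
    (M.argmax v).Nonempty := by
  obtain ⟨B, hB, hEq⟩ := Finset.exists_mem_eq_sup' M.nonempty fun B : Finset V => ∑ i ∈ B, v i
  exact ⟨B, Finset.mem_filter.2 ⟨hB, hEq.symm⟩⟩

namespace BaseFamily

variable {V : Type*} [DecidableEq V]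

lemma sum_le_maxWeight (M : BaseFamily V) (v : V → ℤ) {B : Finset V} (hB : B ∈ M.bases) :
    ∑ i ∈ B, v i ≤ M.maxWeight v :=
  Finset.le_sup' (fun B : Finset V => ∑ i ∈ B, v i) hB

lemma exists_maxWeight (M : BaseFamily V) (v : V → ℤ) :
    ∃ B ∈ M.bases, M.maxWeight v = ∑ i ∈ B, v i := by
  obtain ⟨B, hB, h⟩ := Finset.exists_mem_eq_sup' M.nonempty (fun B : Finset V => ∑ i ∈ B, v i)
  exact ⟨B, hB, h⟩

lemma sum_ind (B : Finset V) (i : V) :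
    ∑ k ∈ B, (if k = i then (1:ℤ) else 0) = if i ∈ B then 1 else 0 := by
  simp [Finset.sum_ite_eq' B i (fun _ => (1:ℤ))]

lemma sum_single (B : Finset V) (p : V → ℤ) (i : V) :
    ∑ k ∈ B, (p k + (if k = i then 1 else 0)) = (∑ k ∈ B, p k) + (if i ∈ B then 1 else 0) := by
  rw [Finset.sum_add_distrib, sum_ind]

lemma maxWeight_le (M : BaseFamily V) (v : V → ℤ) (c : ℤ)
    (h : ∀ B ∈ M.bases, ∑ i ∈ B, v i ≤ c) : M.maxWeight v ≤ c :=
  Finset.sup'_le _ (fun B : Finset V => ∑ i ∈ B, v i) h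

lemma maxWeight_add_const (M : BaseFamily V) (v : V → ℤ) (c : ℤ) (r : ℕ)
    (hr : ∀ B ∈ M.bases, B.card = r) :
    M.maxWeight (fun i => v i + c) = M.maxWeight v + (r : ℤ) * c := by
  apply le_antisymm
  · apply M.maxWeight_le
    intro B hB
    have h1 : ∑ i ∈ B, (v i + c) = (∑ i ∈ B, v i) + (r:ℤ) * c := by
      rw [Finset.sum_add_distrib, Finset.sum_const, hr B hB]
      push_cast [nsmul_eq_mul]
      ring
    rw [h1]
    have := M.sum_le_maxWeight v hB
    linarith
  · obtain ⟨B, hB, hv⟩ := M.exists_maxWeight v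
    have h1 : ∑ i ∈ B, (v i + c) = (∑ i ∈ B, v i) + (r:ℤ) * c := by
      rw [Finset.sum_add_distrib, Finset.sum_const, hr B hB]
      push_cast [nsmul_eq_mul]
      ring
    have := M.sum_le_maxWeight (fun i => v i + c) hB
    rw [h1] at this
    linarith

lemma maxWeight_local (M : BaseFamily V) (p : V → ℤ) {i j : V} (hij : i ≠ j) :
    M.maxWeight p +
      M.maxWeight (fun k => p k + ((if k = i then 1 else 0) + (if k = j then 1 else 0))) ≤
    M.maxWeight (fun k => p k + (if k = i then 1 else 0)) +
      M.maxWeight (fun k => p k + (if k = j then 1 else 0)) := by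
  obtain ⟨A, hA, hAv⟩ := M.exists_maxWeight p
  obtain ⟨C, hC, hCv⟩ := M.exists_maxWeight
    (fun k => p k + ((if k = i then 1 else 0) + (if k = j then 1 else 0)))
  have sumC : M.maxWeight (fun k => p k + ((if k = i then 1 else 0) + (if k = j then 1 else 0)))
      = (∑ k ∈ C, p k) + ((if i ∈ C then 1 else 0) + (if j ∈ C then 1 else 0)) := by
    rw [hCv, Finset.sum_add_distrib, Finset.sum_add_distrib, sum_ind, sum_ind]
  by_cases hiC : i ∈ C
  · by_cases hiA : i ∈ A
    · -- use A for the i-term, C for the j-term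
      have b1 : (∑ k ∈ A, p k) + 1 ≤ M.maxWeight (fun k => p k + (if k = i then 1 else 0)) := by
        have := M.sum_le_maxWeight (fun k => p k + (if k = i then 1 else 0)) hA
        rw [sum_single, if_pos hiA] at this; exact this
      have b2 : (∑ k ∈ C, p k) + (if j ∈ C then 1 else 0) ≤
          M.maxWeight (fun k => p k + (if k = j then 1 else 0)) := by
        have := M.sum_le_maxWeight (fun k => p k + (if k = j then 1 else 0)) hC
        rw [sum_single] at this; exact this
      rw [sumC, hAv, if_pos hiC]
      linarith
    · -- exchange i from C into A
      obtain ⟨k, hk, hC', hA'⟩ := M.exchange C hC A hA i (Finset.mem_sdiff.2 ⟨hiC, hiA⟩)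
      obtain ⟨hkA, hkC⟩ := Finset.mem_sdiff.1 hk
      have hik : i ≠ k := fun h => hkC (h ▸ hiC)
      -- A' = insert i (A.erase k), C' = insert k (C.erase i)
      have sumA' : ∑ m ∈ insert i (A.erase k), p m = p i + ((∑ m ∈ A, p m) - p k) := by
        rw [Finset.sum_insert (by simp [hiA]), Finset.sum_erase_eq_sub hkA]
      have sumC' : ∑ m ∈ insert k (C.erase i), p m = p k + ((∑ m ∈ C, p m) - p i) := by
        rw [Finset.sum_insert (by simp [hkC]), Finset.sum_erase_eq_sub hiC]
      have b1 : (p i + ((∑ m ∈ A, p m) - p k)) + 1 ≤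
          M.maxWeight (fun m => p m + (if m = i then 1 else 0)) := by
        have := M.sum_le_maxWeight (fun m => p m + (if m = i then 1 else 0)) hA'
        rw [sum_single, if_pos (Finset.mem_insert_self i _), sumA'] at this; exact this
      have hjmem : (if j ∈ C then (1:ℤ) else 0) ≤ (if j ∈ insert k (C.erase i) then 1 else 0) := by
        by_cases hjC : j ∈ C
        · rw [if_pos hjC, if_pos]; exact Finset.mem_insert_of_mem (Finset.mem_erase.2 ⟨hij.symm, hjC⟩)
        · rw [if_neg hjC]; split <;> norm_num
      have b2 : (p k + ((∑ m ∈ C, p m) - p i)) + (if j ∈ C then 1 else 0) ≤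
          M.maxWeight (fun m => p m + (if m = j then 1 else 0)) := by
        have := M.sum_le_maxWeight (fun m => p m + (if m = j then 1 else 0)) hC'
        rw [sum_single, sumC'] at this
        linarith
      rw [sumC, hAv, if_pos hiC]
      linarith
  · -- i ∉ C : trivial pairing
    have b1 : (∑ k ∈ A, p k) ≤ M.maxWeight (fun k => p k + (if k = i then 1 else 0)) := by
      have := M.sum_le_maxWeight (fun k => p k + (if k = i then 1 else 0)) hA
      rw [sum_single] at this
      have : (∑ k ∈ A, p k) + 0 ≤ _ := le_trans (by split <;> norm_num) this
      linarith [this]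
    have b2 : (∑ k ∈ C, p k) + (if j ∈ C then 1 else 0) ≤
        M.maxWeight (fun k => p k + (if k = j then 1 else 0)) := by
      have := M.sum_le_maxWeight (fun k => p k + (if k = j then 1 else 0)) hC
      rw [sum_single] at this; exact this
    rw [sumC, hAv, if_neg hiC]
    linarith

lemma maxWeight_antitone_step [Fintype V] (M : BaseFamily V) :
    ∀ n : ℕ, ∀ (p b : V → ℤ) (i : V), (∀ k, 0 ≤ b k) → b i = 0 → (∑ k, b k).toNat = n →
    M.maxWeight (fun k => p k + b k + (if k = i then 1 else 0)) + M.maxWeight p ≤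
      M.maxWeight (fun k => p k + (if k = i then 1 else 0)) + M.maxWeight (fun k => p k + b k) := by
  intro n
  induction n using Nat.strong_induction_on with
  | _ n ih =>
    intro p b i hb hbi hsum
    by_cases hb0 : ∀ k, b k = 0
    · have e1 : (fun k => p k + b k + (if k = i then (1:ℤ) else 0))
          = fun k => p k + (if k = i then 1 else 0) := by
        funext k; rw [hb0 k]; ring
      have e2 : (fun k => p k + b k) = p := by funext k; rw [hb0 k]; ring
      rw [e1, e2]
    · push_neg at hb0
      obtain ⟨j, hj⟩ := hb0
      have hbj : 1 ≤ b j := by have := hb j; omega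
      have hij : i ≠ j := by rintro rfl; omega
      set b' : V → ℤ := fun k => if k = j then b k - 1 else b k with hb'def
      have hb'0 : ∀ k, 0 ≤ b' k := by
        intro k; simp only [hb'def]; split
        · next h => subst h; omega
        · exact hb k
      have hb'i : b' i = 0 := by simp only [hb'def, if_neg hij]; exact hbi
      have hbsplit : ∀ k, b k = b' k + (if k = j then 1 else 0) := by
        intro k; simp only [hb'def]; split <;> ring
      have hsum2 : (∑ k, b k) = (∑ k, b' k) + 1 := by
        calc (∑ k, b k) = ∑ k, (b' k + (if k = j then 1 else 0)) := by
              exact Finset.sum_congr rfl (fun k _ => hbsplit k)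
          _ = (∑ k, b' k) + 1 := by
              rw [Finset.sum_add_distrib, sum_ind, if_pos (Finset.mem_univ j)]
      have hb'nonneg : 0 ≤ ∑ k, b' k := Finset.sum_nonneg (fun k _ => hb'0 k)
      have hm : (∑ k, b' k).toNat < n := by omega
      have IH := ih _ hm p b' i hb'0 hb'i rfl
      have loc := M.maxWeight_local (fun k => p k + b' k) hij
      have e3 : (fun k => (p k + b' k) + (if k = j then (1:ℤ) else 0)) = fun k => p k + b k := by
        funext k; rw [hbsplit k]; ring
      have e4 : (fun k => (p k + b' k) + ((if k = i then (1:ℤ) else 0) + (if k = j then 1 else 0)))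
          = fun k => p k + b k + (if k = i then 1 else 0) := by
        funext k; rw [hbsplit k]; ring
      rw [e3, e4] at loc
      linarith

lemma maxWeight_superadd [Fintype V] (M : BaseFamily V) :
    ∀ n : ℕ, ∀ (p a b : V → ℤ), (∀ k, 0 ≤ a k) → (∀ k, 0 ≤ b k) → (∀ k, a k = 0 ∨ b k = 0) →
    (∑ k, a k).toNat = n →
    M.maxWeight (fun k => p k + a k + b k) + M.maxWeight p ≤
      M.maxWeight (fun k => p k + a k) + M.maxWeight (fun k => p k + b k) := by
  intro n
  induction n using Nat.strong_induction_on with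
  | _ n ih =>
    intro p a b ha hb hdisj hsum
    by_cases ha0 : ∀ k, a k = 0
    · have e1 : (fun k => p k + a k + b k) = fun k => p k + b k := by
        funext k; rw [ha0 k]; ring
      have e2 : (fun k => p k + a k) = p := by funext k; rw [ha0 k]; ring
      rw [e1, e2]; linarith
    · push_neg at ha0
      obtain ⟨i, hi⟩ := ha0
      have hai : 1 ≤ a i := by have := ha i; omega
      have hbi : b i = 0 := by rcases hdisj i with h | h
                               · omega
                               · exact h
      set a' : V → ℤ := fun k => if k = i then a k - 1 else a k with ha'def
      have ha'0 : ∀ k, 0 ≤ a' k := by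
        intro k; simp only [ha'def]; split
        · next h => subst h; omega
        · exact ha k
      have hasplit : ∀ k, a k = a' k + (if k = i then 1 else 0) := by
        intro k; simp only [ha'def]; split <;> ring
      have hdisj' : ∀ k, a' k = 0 ∨ b k = 0 := by
        intro k; rcases hdisj k with h | h
        · left; simp only [ha'def]; split
          · next hk => subst hk; omega
          · exact h
        · right; exact h
      have hsum2 : (∑ k, a k) = (∑ k, a' k) + 1 := by
        calc (∑ k, a k) = ∑ k, (a' k + (if k = i then 1 else 0)) := by
              exact Finset.sum_congr rfl (fun k _ => hasplit k)
          _ = (∑ k, a' k) + 1 := by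
              rw [Finset.sum_add_distrib, sum_ind, if_pos (Finset.mem_univ i)]
      have ha'nonneg : 0 ≤ ∑ k, a' k := Finset.sum_nonneg (fun k _ => ha'0 k)
      have hm : (∑ k, a' k).toNat < n := by omega
      have IH := ih _ hm p a' b ha'0 hb hdisj' rfl
      have stepB := M.maxWeight_antitone_step (∑ k, b k).toNat (fun k => p k + a' k) b i hb hbi rfl
      have e3 : (fun k => (p k + a' k) + b k + (if k = i then (1:ℤ) else 0))
          = fun k => p k + a k + b k := by
        funext k; rw [hasplit k]; ring
      have e4 : (fun k => (p k + a' k) + (if k = i then (1:ℤ) else 0)) = fun k => p k + a k := by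
        funext k; rw [hasplit k]; ring
      have e5 : (fun k => (p k + a' k) + b k) = fun k => p k + a' k + b k := by
        funext k; ring
      rw [e3, e4, e5] at stepB
      linarith

lemma maxWeight_submod [Fintype V] (M : BaseFamily V) (x y : V → ℤ) :
    M.maxWeight (fun k => max (x k) (y k)) + M.maxWeight (fun k => min (x k) (y k)) ≤
      M.maxWeight x + M.maxWeight y := by
  have hdisj : ∀ k, x k - min (x k) (y k) = 0 ∨ y k - min (x k) (y k) = 0 := by
    intro k
    rcases le_total (x k) (y k) with h | h
    · left; rw [min_eq_left h]; ring
    · right; rw [min_eq_right h]; ring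
  have key := M.maxWeight_superadd (∑ k, (x k - min (x k) (y k))).toNat
      (fun k => min (x k) (y k)) (fun k => x k - min (x k) (y k))
      (fun k => y k - min (x k) (y k))
      (fun k => by simp [min_le_left])
      (fun k => by simp [min_le_right])
      hdisj
      rfl
  have e1 : (fun k => min (x k) (y k) + (x k - min (x k) (y k)) + (y k - min (x k) (y k)))
      = fun k => max (x k) (y k) := by
    funext k; rcases le_total (x k) (y k) with h | h
    · rw [min_eq_left h, max_eq_right h]; ring
    · rw [min_eq_right h, max_eq_left h]; ring
  have e2 : (fun k => min (x k) (y k) + (x k - min (x k) (y k))) = x := by funext k; ring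
  have e3 : (fun k => min (x k) (y k) + (y k - min (x k) (y k))) = y := by funext k; ring
  rw [e1, e2, e3] at key
  have e4 : (fun k => min (x k) (y k)) = fun k => min (x k) (y k) := rfl
  linarith

end BaseFamily

def dualObj {V : Type*} [DecidableEq V] (M₁ M₂ : BaseFamily V) (w : V → ℤ) (p : V → ℤ) : ℤ :=
  M₁.maxWeight p + M₂.maxWeight (fun i => w i - p i)

namespace BaseFamily

variable {V : Type*} [DecidableEq V]

lemma sum_chi [Fintype V] (S : Finset V) :
    (∑ k, (if k ∈ S then (1:ℤ) else 0)) = S.card := by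
  rw [Finset.sum_ite_mem, Finset.univ_inter, Finset.sum_const, nsmul_eq_mul, mul_one]

lemma dualObj_submod [Fintype V] (M₁ M₂ : BaseFamily V) (w : V → ℤ) (x y : V → ℤ) :
    dualObj M₁ M₂ w (fun k => max (x k) (y k)) + dualObj M₁ M₂ w (fun k => min (x k) (y k)) ≤
      dualObj M₁ M₂ w x + dualObj M₁ M₂ w y := by
  have h1 := M₁.maxWeight_submod x y
  have h2 := M₂.maxWeight_submod (fun i => w i - x i) (fun i => w i - y i)
  have e1 : (fun k => max (w k - x k) (w k - y k)) = fun k => w k - min (x k) (y k) := by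
    funext k; rcases le_total (x k) (y k) with h | h
    · rw [min_eq_left h, max_eq_left (by linarith)]
    · rw [min_eq_right h, max_eq_right (by linarith)]
  have e2 : (fun k => min (w k - x k) (w k - y k)) = fun k => w k - max (x k) (y k) := by
    funext k; rcases le_total (x k) (y k) with h | h
    · rw [max_eq_right h, min_eq_right (by linarith)]
    · rw [max_eq_left h, min_eq_left (by linarith)]
  rw [e1, e2] at h2
  unfold dualObj
  linarith

lemma dualObj_shift [Fintype V] (M₁ M₂ : BaseFamily V) (w : V → ℤ) (r : ℕ)
    (hr₁ : ∀ B ∈ M₁.bases, B.card = r) (hr₂ : ∀ B ∈ M₂.bases, B.card = r)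
    (p : V → ℤ) (c : ℤ) :
    dualObj M₁ M₂ w (fun k => p k + c) = dualObj M₁ M₂ w p := by
  have h1 := M₁.maxWeight_add_const p c r hr₁
  have h2 := M₂.maxWeight_add_const (fun i => w i - p i) (-c) r hr₂
  have e : (fun i => w i - (p i + c)) = fun i => (w i - p i) + (-c) := by funext i; ring
  unfold dualObj
  rw [e, h1, h2]
  ring

lemma dualObj_localglobal [Fintype V] [Nonempty V] (M₁ M₂ : BaseFamily V) (w : V → ℤ) (r : ℕ)
    (hr₁ : ∀ B ∈ M₁.bases, B.card = r) (hr₂ : ∀ B ∈ M₂.bases, B.card = r) (p : V → ℤ)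
    (hp : ∀ S : Finset V, dualObj M₁ M₂ w p ≤
        dualObj M₁ M₂ w (fun k => p k + (if k ∈ S then 1 else 0))) :
    ∀ q, dualObj M₁ M₂ w p ≤ dualObj M₁ M₂ w q := by
  have key : ∀ n : ℕ, ∀ q : V → ℤ, (∀ k, p k ≤ q k) → (∑ k, (q k - p k)).toNat = n →
      dualObj M₁ M₂ w p ≤ dualObj M₁ M₂ w q := by
    intro n
    induction n using Nat.strong_induction_on with
    | _ n ih =>
      intro q hq hn
      by_cases hqp : ∀ k, q k = p k
      · have : q = p := funext hqp
        rw [this]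
      · push_neg at hqp
        obtain ⟨j, hj⟩ := hqp
        set h : ℤ := Finset.univ.sup' Finset.univ_nonempty (fun k => q k - p k) with hdef
        have hle : ∀ k, q k - p k ≤ h := fun k =>
          Finset.le_sup' (fun k => q k - p k) (Finset.mem_univ k)
        have hh1 : 1 ≤ h := by
          have := Finset.le_sup' (fun k => q k - p k) (Finset.mem_univ j)
          have := hq j
          omega
        set S : Finset V := Finset.univ.filter (fun k => q k - p k = h) with hSdef
        have hmemS : ∀ k, k ∈ S ↔ q k - p k = h := by
          intro k; simp [hSdef]
        have hScard : 1 ≤ S.card := by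
          obtain ⟨k₀, _, hk₀⟩ := Finset.exists_mem_eq_sup' (Finset.univ_nonempty (α := V))
            (fun k => q k - p k)
          have : k₀ ∈ S := (hmemS k₀).2 hk₀.symm
          exact Finset.card_pos.2 ⟨k₀, this⟩
        have sub := dualObj_submod M₁ M₂ w q (fun k => p k + (h - 1))
        have e1 : (fun k => max (q k) (p k + (h - 1)))
            = fun k => (p k + (if k ∈ S then 1 else 0)) + (h - 1) := by
          funext k
          by_cases hk : k ∈ S
          · have := (hmemS k).1 hk
            rw [if_pos hk, max_eq_left (by omega)]; omega
          · have h1 := hle k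
            have h2 : q k - p k ≠ h := fun hc => hk ((hmemS k).2 hc)
            rw [if_neg hk, max_eq_right (by omega)]; omega
        have e2 : (fun k => min (q k) (p k + (h - 1)))
            = fun k => q k - (if k ∈ S then 1 else 0) := by
          funext k
          by_cases hk : k ∈ S
          · have := (hmemS k).1 hk
            rw [if_pos hk, min_eq_right (by omega)]; omega
          · have h1 := hle k
            have h2 : q k - p k ≠ h := fun hc => hk ((hmemS k).2 hc)
            rw [if_neg hk, min_eq_left (by omega)]; omega
        rw [e1, e2] at sub
        rw [dualObj_shift M₁ M₂ w r hr₁ hr₂ (fun k => p k + (if k ∈ S then 1 else 0)) (h-1)] at sub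
        have eshift : (fun k => p k + (h - 1)) = fun k => p k + (h - 1) := rfl
        rw [dualObj_shift M₁ M₂ w r hr₁ hr₂ p (h-1)] at sub
        have hstep := hp S
        -- sub : g (p + χS) + g (q - χS) ≤ g q + g p
        have hq' : ∀ k, p k ≤ q k - (if k ∈ S then 1 else 0) := by
          intro k
          by_cases hk : k ∈ S
          · have := (hmemS k).1 hk
            rw [if_pos hk]; omega
          · rw [if_neg hk]; have := hq k; omega
        have hsum' : (∑ k, ((q k - (if k ∈ S then 1 else 0)) - p k))
            = (∑ k, (q k - p k)) - S.card := by
          have : ∀ k : V, (q k - (if k ∈ S then 1 else 0)) - p k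
              = (q k - p k) - (if k ∈ S then 1 else 0) := by intro k; ring
          rw [Finset.sum_congr rfl (fun k _ => this k), Finset.sum_sub_distrib, sum_chi]
        have hnn : 0 ≤ ∑ k, ((q k - (if k ∈ S then 1 else 0)) - p k) :=
          Finset.sum_nonneg (fun k _ => by have := hq' k; omega)
        have hnn2 : 0 ≤ ∑ k, (q k - p k) :=
          Finset.sum_nonneg (fun k _ => by have := hq k; omega)
        have hm : (∑ k, ((q k - (if k ∈ S then 1 else 0)) - p k)).toNat < n := by omega
        have IH := ih _ hm (fun k => q k - (if k ∈ S then 1 else 0)) hq' rfl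
        linarith
  intro q
  set c : ℤ := Finset.univ.sup' Finset.univ_nonempty (fun k => p k - q k) with hcdef
  have hq : ∀ k, p k ≤ q k + c := by
    intro k
    have := Finset.le_sup' (fun k => p k - q k) (Finset.mem_univ k)
    omega
  have := key (∑ k, ((q k + c) - p k)).toNat (fun k => q k + c) hq rfl
  rwa [dualObj_shift M₁ M₂ w r hr₁ hr₂ q c] at this

end BaseFamily

namespace BaseFamily

variable {V : Type*} [DecidableEq V]

lemma dualObj_lb [Fintype V] (M₁ M₂ : BaseFamily V) (w : V → ℤ) {B₀ : Finset V}
    (hB₁ : B₀ ∈ M₁.bases) (hB₂ : B₀ ∈ M₂.bases) (p : V → ℤ) :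
    (∑ i ∈ B₀, w i) ≤ dualObj M₁ M₂ w p := by
  have h1 := M₁.sum_le_maxWeight p hB₁
  have h2 := M₂.sum_le_maxWeight (fun i => w i - p i) hB₂
  have e : ∑ i ∈ B₀, (w i - p i) = (∑ i ∈ B₀, w i) - ∑ i ∈ B₀, p i :=
    Finset.sum_sub_distrib _ _
  rw [e] at h2
  unfold dualObj
  linarith

lemma dualObj_descent [Fintype V] [Nonempty V] (M₁ M₂ : BaseFamily V) (w : V → ℤ) (r : ℕ)
    (hr₁ : ∀ B ∈ M₁.bases, B.card = r) (hr₂ : ∀ B ∈ M₂.bases, B.card = r)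
    {B₀ : Finset V} (hB₁ : B₀ ∈ M₁.bases) (hB₂ : B₀ ∈ M₂.bases) :
    ∀ n : ℕ, ∀ p : V → ℤ, (dualObj M₁ M₂ w p - ∑ i ∈ B₀, w i).toNat ≤ n →
      ∃ q : V → ℤ, (∀ k, p k ≤ q k ∧ q k ≤ p k + n) ∧
        ∀ p', dualObj M₁ M₂ w q ≤ dualObj M₁ M₂ w p' := by
  intro n
  induction n using Nat.strong_induction_on with
  | _ n ih =>
    intro p hn
    by_cases hloc : ∀ S : Finset V, dualObj M₁ M₂ w p ≤
        dualObj M₁ M₂ w (fun k => p k + (if k ∈ S then 1 else 0))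
    · refine ⟨p, fun k => ⟨le_refl _, by omega⟩,
        dualObj_localglobal M₁ M₂ w r hr₁ hr₂ p hloc⟩
    · push_neg at hloc
      obtain ⟨S, hS⟩ := hloc
      have hlb := dualObj_lb M₁ M₂ w hB₁ hB₂ (fun k => p k + (if k ∈ S then 1 else 0))
      have hlbp := dualObj_lb M₁ M₂ w hB₁ hB₂ p
      have hn1 : 1 ≤ n := by omega
      have hm : (dualObj M₁ M₂ w (fun k => p k + (if k ∈ S then 1 else 0))
          - ∑ i ∈ B₀, w i).toNat ≤ n - 1 := by omega
      obtain ⟨q, hq, hmin⟩ := ih (n-1) (by omega) (fun k => p k + (if k ∈ S then 1 else 0)) hm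
      refine ⟨q, fun k => ?_, hmin⟩
      obtain ⟨hq1, hq2⟩ := hq k
      constructor
      · have : (0:ℤ) ≤ if k ∈ S then 1 else 0 := by split <;> norm_num
        omega
      · have : (if k ∈ S then (1:ℤ) else 0) ≤ 1 := by split <;> norm_num
        have hc : ((n-1 : ℕ) : ℤ) ≤ (n : ℤ) - 1 := by omega
        omega

end BaseFamily


/-- For two rank-`r` matroids `M₁, M₂` on `V` with a common base and weights `w` with
`W = ‖w‖∞`, there is a minimizer `p*` of the dual objective
`g(p) = max_{B∈B₁} p(B) + max_{B∈B₂} (w − p)(B)` with `‖p*‖∞ ≤ rW`. -/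
theorem stmt10 {V : Type*} [DecidableEq V] [Fintype V] [Nonempty V]
    (M₁ M₂ : BaseFamily V) (r : ℕ)
    (hr₁ : ∀ B ∈ M₁.bases, B.card = r) (hr₂ : ∀ B ∈ M₂.bases, B.card = r)
    (hcommon : ∃ B, B ∈ M₁.bases ∧ B ∈ M₂.bases)
    (w : V → ℤ) (W : ℤ)
    (hW : W = Finset.univ.sup' Finset.univ_nonempty fun i => |w i|) :
    ∃ pstar : V → ℤ,
      (∀ p : V → ℤ,
        M₁.maxWeight pstar + M₂.maxWeight (fun i => w i - pstar i) ≤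
          M₁.maxWeight p + M₂.maxWeight (fun i => w i - p i)) ∧
      ∀ i, |pstar i| ≤ (r : ℤ) * W := by
  obtain ⟨B₀, hB₁, hB₂⟩ := hcommon
  have hWi : ∀ i, |w i| ≤ W := by
    intro i; rw [hW]; exact Finset.le_sup' (fun i => |w i|) (Finset.mem_univ i)
  have hW0 : 0 ≤ W := by
    obtain ⟨i⟩ := (inferInstance : Nonempty V)
    exact le_trans (abs_nonneg (w i)) (hWi i)
  have h0 : M₁.maxWeight (fun _ => (0:ℤ)) = 0 := by
    apply le_antisymm
    · apply M₁.maxWeight_le; intro B hB; simp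
    · obtain ⟨B, hB, h⟩ := M₁.exists_maxWeight (fun _ => (0:ℤ))
      rw [h]; simp
  have hub : M₂.maxWeight w ≤ (r:ℤ) * W := by
    apply M₂.maxWeight_le; intro B hB
    calc ∑ i ∈ B, w i ≤ ∑ i ∈ B, W := Finset.sum_le_sum (fun i _ => (abs_le.1 (hWi i)).2)
      _ = (r:ℤ) * W := by rw [Finset.sum_const, hr₂ B hB, nsmul_eq_mul]
  have hlbw : -((r:ℤ) * W) ≤ ∑ i ∈ B₀, w i := by
    calc -((r:ℤ)*W) = ∑ _i ∈ B₀, (-W) := by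
          rw [Finset.sum_const, hr₁ B₀ hB₁, nsmul_eq_mul]; ring
      _ ≤ ∑ i ∈ B₀, w i := Finset.sum_le_sum (fun i _ => (abs_le.1 (hWi i)).1)
  have e0 : dualObj M₁ M₂ w (fun _ => 0) = M₂.maxWeight w := by
    unfold dualObj
    have e : (fun i => w i - (fun _ => (0:ℤ)) i) = w := by funext i; simp
    rw [e, h0]; ring
  have hg0lb := BaseFamily.dualObj_lb M₁ M₂ w hB₁ hB₂ (fun _ => 0)
  set n₀ : ℕ := (dualObj M₁ M₂ w (fun _ => 0) - ∑ i ∈ B₀, w i).toNat with hn₀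
  obtain ⟨q, hq, hmin⟩ := BaseFamily.dualObj_descent M₁ M₂ w r hr₁ hr₂ hB₁ hB₂ n₀
    (fun _ => 0) (le_refl _)
  have hn₀le : (n₀ : ℤ) ≤ 2 * ((r:ℤ) * W) := by
    have : (n₀ : ℤ) = dualObj M₁ M₂ w (fun _ => 0) - ∑ i ∈ B₀, w i := by
      rw [hn₀, Int.toNat_of_nonneg (by omega)]
    rw [this, e0]
    linarith
  refine ⟨fun k => q k + (-((r:ℤ) * W)), ?_, ?_⟩
  · intro p
    have hshift := BaseFamily.dualObj_shift M₁ M₂ w r hr₁ hr₂ q (-((r:ℤ) * W))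
    have := hmin p
    show dualObj M₁ M₂ w (fun k => q k + (-((r:ℤ) * W))) ≤ dualObj M₁ M₂ w p
    rw [hshift]
    exact this
  · intro i
    have hq1 : (0:ℤ) ≤ q i := (hq i).1
    have hq2 : q i ≤ 0 + (n₀:ℤ) := (hq i).2
    show |q i + (-((r:ℤ) * W))| ≤ (r:ℤ) * W
    rw [abs_le]
    constructor <;> linarith
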